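/- Let u, v, w be linearly independent unit vectors in the Euclidean space ℝ³. Define the interior angle of the spherical triangle at u as A = ∠(v − ⟨v, u⟩u, w − ⟨w, u⟩u) (the angle between the tangential projections of v and w at u), and similarly B at v and C at w. Then B + C < π + A. (Equivalently, the exterior angles π − A, π − B, π − C satisfy the strict triangle inequality, being the side lengths of the polar triangle.) -/

import Mathlib

open Real
open scoped RealInnerProductSpace

section Aux

variable {E : Type*} [NormedAddCommGroup E] [InnerProductSpace ℝ E]

lemma proj_inner (x y z : E) (hx : ‖x‖ = 1) :
    ⟪y - ⟪y, x⟫ • x, z - ⟪z, x⟫ • x⟫ = ⟪y, z⟫ - ⟪y, x⟫ * ⟪z, x⟫ := by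
  have hx2 : ⟪x, x⟫ = 1 := by rw [real_inner_self_eq_norm_sq, hx]; norm_num
  simp only [inner_sub_left, inner_sub_right, real_inner_smul_left, real_inner_smul_right, hx2]
  rw [real_inner_comm x z]
  ring

lemma proj_norm (x y : E) (hx : ‖x‖ = 1) (hy : ‖y‖ = 1) :
    ‖y - ⟪y, x⟫ • x‖ = Real.sqrt (1 - ⟪y, x⟫ ^ 2) := by
  rw [← Real.sqrt_sq (norm_nonneg (y - ⟪y, x⟫ • x)), ← real_inner_self_eq_norm_sq,
    proj_inner x y y hx]
  congr 1
  rw [real_inner_self_eq_norm_sq, hy]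
  ring

end Aux

set_option maxHeartbeats 1600000 in
/-- For a nondegenerate spherical triangle with vertices `u`, `v`, `w` (linearly
independent unit vectors in `ℝ³`) and interior angles `A`, `B`, `C` at `u`, `v`, `w`
(angles between the tangential projections of the other two vertices), one has
`B + C < π + A`. -/
theorem spherical_triangle_angle_inequality (u v w : EuclideanSpace ℝ (Fin 3))
    (hu : ‖u‖ = 1) (hv : ‖v‖ = 1) (hw : ‖w‖ = 1)
    (hli : LinearIndependent ℝ ![u, v, w])
    (A B C : ℝ)
    (hA : A = InnerProductGeometry.angle (v - ⟪v, u⟫ • u) (w - ⟪w, u⟫ • u))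
    (hB : B = InnerProductGeometry.angle (u - ⟪u, v⟫ • v) (w - ⟪w, v⟫ • v))
    (hC : C = InnerProductGeometry.angle (u - ⟪u, w⟫ • w) (v - ⟪v, w⟫ • w)) :
    B + C < π + A := by
  have hcoef : ∀ α β γ : ℝ, α • u + β • v + γ • w = 0 → α = 0 ∧ β = 0 ∧ γ = 0 := by
    intro α β γ h
    have h2 := Fintype.linearIndependent_iff.mp hli ![α, β, γ]
      (by simpa [Fin.sum_univ_three] using h)
    exact ⟨h2 0, h2 1, h2 2⟩
  obtain ⟨a, ha⟩ : ∃ x, ⟪v, w⟫ = x := ⟨_, rfl⟩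
  obtain ⟨b, hb⟩ : ∃ x, ⟪u, w⟫ = x := ⟨_, rfl⟩
  obtain ⟨c, hc⟩ : ∃ x, ⟪u, v⟫ = x := ⟨_, rfl⟩
  have ha' : ⟪w, v⟫ = a := by rw [real_inner_comm]; exact ha
  have hb' : ⟪w, u⟫ = b := by rw [real_inner_comm]; exact hb
  have hc' : ⟪v, u⟫ = c := by rw [real_inner_comm]; exact hc
  -- positivity of 1 - a², 1 - b², 1 - c²
  have hp : 0 < 1 - a ^ 2 := by
    have hne : v - ⟪v, w⟫ • w ≠ 0 := by
      intro h
      have h0 : (0 : ℝ) • u + (1 : ℝ) • v + (-⟪v, w⟫) • w = 0 := by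
        have hx : (0 : ℝ) • u + (1 : ℝ) • v + (-⟪v, w⟫) • w = v - ⟪v, w⟫ • w := by module
        rw [hx, h]
      exact one_ne_zero (hcoef _ _ _ h0).2.1
    have hpos := norm_pos_iff.mpr hne
    rw [proj_norm w v hw hv, ha] at hpos
    exact Real.sqrt_pos.mp hpos
  have hq : 0 < 1 - b ^ 2 := by
    have hne : u - ⟪u, w⟫ • w ≠ 0 := by
      intro h
      have h0 : (1 : ℝ) • u + (0 : ℝ) • v + (-⟪u, w⟫) • w = 0 := by
        have hx : (1 : ℝ) • u + (0 : ℝ) • v + (-⟪u, w⟫) • w = u - ⟪u, w⟫ • w := by module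
        rw [hx, h]
      exact one_ne_zero (hcoef _ _ _ h0).1
    have hpos := norm_pos_iff.mpr hne
    rw [proj_norm w u hw hu, hb] at hpos
    exact Real.sqrt_pos.mp hpos
  have hr : 0 < 1 - c ^ 2 := by
    have hne : u - ⟪u, v⟫ • v ≠ 0 := by
      intro h
      have h0 : (1 : ℝ) • u + (-⟪u, v⟫) • v + (0 : ℝ) • w = 0 := by
        have hx : (1 : ℝ) • u + (-⟪u, v⟫) • v + (0 : ℝ) • w = u - ⟪u, v⟫ • v := by module
        rw [hx, h]
      exact one_ne_zero (hcoef _ _ _ h0).1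
    have hpos := norm_pos_iff.mpr hne
    rw [proj_norm v u hv hu, hc] at hpos
    exact Real.sqrt_pos.mp hpos
  -- angle facts
  have hA_ne : A ≠ 0 := by
    rw [hA]
    intro h
    obtain ⟨-, r', -, heq⟩ := InnerProductGeometry.angle_eq_zero_iff.mp h
    have h0 : (r' * ⟪v, u⟫ - ⟪w, u⟫) • u + (-r') • v + (1 : ℝ) • w = 0 := by
      have hx : (r' * ⟪v, u⟫ - ⟪w, u⟫) • u + (-r') • v + (1 : ℝ) • w
          = (w - ⟪w, u⟫ • u) - r' • (v - ⟪v, u⟫ • u) := by module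
      rw [hx, heq, sub_self]
    exact one_ne_zero (hcoef _ _ _ h0).2.2
  have hBaux : ∀ r' : ℝ, w - ⟪w, v⟫ • v ≠ r' • (u - ⟪u, v⟫ • v) := by
    intro r' heq
    have h0 : (-r') • u + (r' * ⟪u, v⟫ - ⟪w, v⟫) • v + (1 : ℝ) • w = 0 := by
      have hx : (-r') • u + (r' * ⟪u, v⟫ - ⟪w, v⟫) • v + (1 : ℝ) • w
          = (w - ⟪w, v⟫ • v) - r' • (u - ⟪u, v⟫ • v) := by module
      rw [hx, heq, sub_self]
    exact one_ne_zero (hcoef _ _ _ h0).2.2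
  have hB_ne0 : B ≠ 0 := by
    rw [hB]
    intro h
    obtain ⟨-, r', -, heq⟩ := InnerProductGeometry.angle_eq_zero_iff.mp h
    exact hBaux r' heq
  have hB_nepi : B ≠ π := by
    rw [hB]
    intro h
    obtain ⟨-, r', -, heq⟩ := InnerProductGeometry.angle_eq_pi_iff.mp h
    exact hBaux r' heq
  have hA_nonneg : 0 ≤ A := hA ▸ InnerProductGeometry.angle_nonneg _ _
  have hA_le : A ≤ π := hA ▸ InnerProductGeometry.angle_le_pi _ _
  have hB_nonneg : 0 ≤ B := hB ▸ InnerProductGeometry.angle_nonneg _ _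
  have hB_le : B ≤ π := hB ▸ InnerProductGeometry.angle_le_pi _ _
  have hC_nonneg : 0 ≤ C := hC ▸ InnerProductGeometry.angle_nonneg _ _
  have hC_le : C ≤ π := hC ▸ InnerProductGeometry.angle_le_pi _ _
  have hApos : 0 < A := lt_of_le_of_ne hA_nonneg (Ne.symm hA_ne)
  have hsinB_pos : 0 < Real.sin B :=
    Real.sin_pos_of_pos_of_lt_pi (lt_of_le_of_ne hB_nonneg (Ne.symm hB_ne0))
      (lt_of_le_of_ne hB_le hB_nepi)
  have hsinC_nonneg : 0 ≤ Real.sin C := Real.sin_nonneg_of_nonneg_of_le_pi hC_nonneg hC_le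
  -- cosine formulas
  have hcosA : Real.cos A = (a - c * b) / (Real.sqrt (1 - c ^ 2) * Real.sqrt (1 - b ^ 2)) := by
    rw [hA, InnerProductGeometry.cos_angle, proj_inner u v w hu, proj_norm u v hu hv,
      proj_norm u w hu hw, ha, hb', hc']
  have hcosB : Real.cos B = (b - c * a) / (Real.sqrt (1 - c ^ 2) * Real.sqrt (1 - a ^ 2)) := by
    rw [hB, InnerProductGeometry.cos_angle, proj_inner v u w hv, proj_norm v u hv hu,
      proj_norm v w hv hw, hb, hc, ha']
  have hcosC : Real.cos C = (c - b * a) / (Real.sqrt (1 - b ^ 2) * Real.sqrt (1 - a ^ 2)) := by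
    rw [hC, InnerProductGeometry.cos_angle, proj_inner w u v hw, proj_norm w u hw hu,
      proj_norm w v hw hv, hb, hc, ha]
  have hrne : Real.sqrt (1 - c ^ 2) ≠ 0 := (Real.sqrt_pos.mpr hr).ne'
  have hqne : Real.sqrt (1 - b ^ 2) ≠ 0 := (Real.sqrt_pos.mpr hq).ne'
  have hpne : Real.sqrt (1 - a ^ 2) ≠ 0 := (Real.sqrt_pos.mpr hp).ne'
  have e2 : Real.cos B * (Real.sqrt (1 - c ^ 2) * Real.sqrt (1 - a ^ 2)) = b - c * a := by
    rw [hcosB, div_mul_cancel₀ _ (mul_ne_zero hrne hpne)]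
  have e3 : Real.cos C * (Real.sqrt (1 - b ^ 2) * Real.sqrt (1 - a ^ 2)) = c - b * a := by
    rw [hcosC, div_mul_cancel₀ _ (mul_ne_zero hqne hpne)]
  have e4 : Real.cos A * (Real.sqrt (1 - c ^ 2) * Real.sqrt (1 - b ^ 2)) = a - c * b := by
    rw [hcosA, div_mul_cancel₀ _ (mul_ne_zero hrne hqne)]
  -- sine formulas
  have eB : Real.sin B * (Real.sqrt (1 - c ^ 2) * Real.sqrt (1 - a ^ 2))
      = Real.sqrt (1 - a ^ 2 - b ^ 2 - c ^ 2 + 2 * a * b * c) := by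
    have hnn : 0 ≤ Real.sin B * (Real.sqrt (1 - c ^ 2) * Real.sqrt (1 - a ^ 2)) :=
      mul_nonneg hsinB_pos.le (by positivity)
    have hsq : (Real.sin B * (Real.sqrt (1 - c ^ 2) * Real.sqrt (1 - a ^ 2))) ^ 2
        = 1 - a ^ 2 - b ^ 2 - c ^ 2 + 2 * a * b * c := by
      rw [mul_pow, mul_pow, Real.sq_sqrt hr.le, Real.sq_sqrt hp.le, Real.sin_sq, hcosB,
        div_pow, mul_pow, Real.sq_sqrt hr.le, Real.sq_sqrt hp.le]
      field_simp
      ring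
    rw [← Real.sqrt_sq hnn, hsq]
  have eC : Real.sin C * (Real.sqrt (1 - b ^ 2) * Real.sqrt (1 - a ^ 2))
      = Real.sqrt (1 - a ^ 2 - b ^ 2 - c ^ 2 + 2 * a * b * c) := by
    have hnn : 0 ≤ Real.sin C * (Real.sqrt (1 - b ^ 2) * Real.sqrt (1 - a ^ 2)) :=
      mul_nonneg hsinC_nonneg (by positivity)
    have hsq : (Real.sin C * (Real.sqrt (1 - b ^ 2) * Real.sqrt (1 - a ^ 2))) ^ 2
        = 1 - a ^ 2 - b ^ 2 - c ^ 2 + 2 * a * b * c := by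
      rw [mul_pow, mul_pow, Real.sq_sqrt hq.le, Real.sq_sqrt hp.le, Real.sin_sq, hcosC,
        div_pow, mul_pow, Real.sq_sqrt hq.le, Real.sq_sqrt hp.le]
      field_simp
      ring
    rw [← Real.sqrt_sq hnn, hsq]
  have hD_pos : 0 < 1 - a ^ 2 - b ^ 2 - c ^ 2 + 2 * a * b * c := by
    have hpos : 0 < Real.sin B * (Real.sqrt (1 - c ^ 2) * Real.sqrt (1 - a ^ 2)) :=
      mul_pos hsinB_pos (mul_pos (Real.sqrt_pos.mpr hr) (Real.sqrt_pos.mpr hp))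
    rw [eB] at hpos
    exact Real.sqrt_pos.mp hpos
  have h2 : Real.sqrt (1 - a ^ 2) * Real.sqrt (1 - a ^ 2) = 1 - a ^ 2 :=
    Real.mul_self_sqrt hp.le
  have e_prod : Real.sin B * Real.sin C
      * ((1 - a ^ 2) * Real.sqrt (1 - b ^ 2) * Real.sqrt (1 - c ^ 2))
      = 1 - a ^ 2 - b ^ 2 - c ^ 2 + 2 * a * b * c := by
    calc Real.sin B * Real.sin C
        * ((1 - a ^ 2) * Real.sqrt (1 - b ^ 2) * Real.sqrt (1 - c ^ 2))
        = (Real.sin B * (Real.sqrt (1 - c ^ 2) * Real.sqrt (1 - a ^ 2)))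
          * (Real.sin C * (Real.sqrt (1 - b ^ 2) * Real.sqrt (1 - a ^ 2))) := by
          linear_combination (-(Real.sin B * Real.sin C * Real.sqrt (1 - b ^ 2)
            * Real.sqrt (1 - c ^ 2))) * h2
      _ = Real.sqrt (1 - a ^ 2 - b ^ 2 - c ^ 2 + 2 * a * b * c)
          * Real.sqrt (1 - a ^ 2 - b ^ 2 - c ^ 2 + 2 * a * b * c) := by rw [eB, eC]
      _ = 1 - a ^ 2 - b ^ 2 - c ^ 2 + 2 * a * b * c := Real.mul_self_sqrt hD_pos.le
  have key : (Real.sin B * Real.sin C - Real.cos B * Real.cos C - Real.cos A)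
      * ((1 - a ^ 2) * Real.sqrt (1 - b ^ 2) * Real.sqrt (1 - c ^ 2))
      = (1 - a ^ 2 - b ^ 2 - c ^ 2 + 2 * a * b * c) * (1 - a) := by
    have expand : (Real.sin B * Real.sin C - Real.cos B * Real.cos C - Real.cos A)
        * ((1 - a ^ 2) * Real.sqrt (1 - b ^ 2) * Real.sqrt (1 - c ^ 2))
        = Real.sin B * Real.sin C
            * ((1 - a ^ 2) * Real.sqrt (1 - b ^ 2) * Real.sqrt (1 - c ^ 2))
          - (Real.cos B * (Real.sqrt (1 - c ^ 2) * Real.sqrt (1 - a ^ 2)))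
            * (Real.cos C * (Real.sqrt (1 - b ^ 2) * Real.sqrt (1 - a ^ 2)))
          - (Real.cos A * (Real.sqrt (1 - c ^ 2) * Real.sqrt (1 - b ^ 2))) * (1 - a ^ 2) := by
      linear_combination (Real.cos B * Real.cos C * Real.sqrt (1 - b ^ 2)
        * Real.sqrt (1 - c ^ 2)) * h2
    rw [expand, e_prod, e2, e3, e4]
    ring
  have ha1 : a < 1 := by nlinarith [sq_nonneg (1 - a)]
  have hX : 0 < Real.sin B * Real.sin C - Real.cos B * Real.cos C - Real.cos A := by
    have hk : 0 < (1 - a ^ 2) * Real.sqrt (1 - b ^ 2) * Real.sqrt (1 - c ^ 2) :=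
      mul_pos (mul_pos hp (Real.sqrt_pos.mpr hq)) (Real.sqrt_pos.mpr hr)
    have hm : 0 < (1 - a ^ 2 - b ^ 2 - c ^ 2 + 2 * a * b * c) * (1 - a) :=
      mul_pos hD_pos (by linarith)
    have hXeq : Real.sin B * Real.sin C - Real.cos B * Real.cos C - Real.cos A
        = (1 - a ^ 2 - b ^ 2 - c ^ 2 + 2 * a * b * c) * (1 - a)
          / ((1 - a ^ 2) * Real.sqrt (1 - b ^ 2) * Real.sqrt (1 - c ^ 2)) :=
      (eq_div_iff hk.ne').mpr key
    rw [hXeq]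
    exact div_pos hm hk
  by_cases hcase : B + C ≤ π
  · linarith
  · push_neg at hcase
    have hmem1 : B + C - π ∈ Set.Icc 0 π := ⟨by linarith, by linarith⟩
    have hmem2 : A ∈ Set.Icc 0 π := ⟨hA_nonneg, hA_le⟩
    have hcoslt : Real.cos A < Real.cos (B + C - π) := by
      rw [Real.cos_sub_pi, Real.cos_add]
      linarith
    have := (Real.strictAntiOn_cos.lt_iff_gt hmem2 hmem1).mp hcoslt
    linarith
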